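/- Let k ≥ 2, let G_k be a 3-regular bipartite graph on 2k vertices with bipartition into independent sets A and B of size k, let H_k be as constructed, and let σ ∈ Res(G_k, H_k). Let A(σ) be the signed adjacency matrix of the mismatch graph G_k^σ − H_k (entries +1 on positive edges, −1 on negative edges, 0 otherwise). If G_k^σ − H_k has a vertex of degree at least 4, then the spectral (ℓ_2-operator) norms satisfy ‖A(σ)²‖₂ = ‖A(σ)‖₂² > 4. -/

import Mathlib

open SimpleGraph

section MismatchDefs

variable {V W : Type*}

/-- The mismatch graph `G^π − H`: the symmetric difference of the image of `G` under the
bijection `π` with `H`, as a graph on `V(H)`. Its edges are the positive edges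
(edges of `G^π` not in `H`) together with the negative edges (edges of `H` not in `G^π`). -/
def mismatchGraph (G : SimpleGraph V) (H : SimpleGraph W) (π : V ≃ W) : SimpleGraph W :=
  symmDiff (G.map π.toEmbedding) H

/-- The degree of a vertex in the mismatch graph `G^π − H`. -/
noncomputable def mismatchDeg (G : SimpleGraph V) (H : SimpleGraph W) (π : V ≃ W) (x : W) : ℕ :=
  ((mismatchGraph G H π).neighborSet x).ncard

/-- The number of positive edges of `G^π − H` incident to `x`. -/
noncomputable def posDeg (G : SimpleGraph V) (H : SimpleGraph W) (π : V ≃ W) (x : W) : ℕ :=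
  ((G.map π.toEmbedding).neighborSet x \ H.neighborSet x).ncard

/-- The number of negative edges of `G^π − H` incident to `x`. -/
noncomputable def negDeg (G : SimpleGraph V) (H : SimpleGraph W) (π : V ≃ W) (x : W) : ℕ :=
  (H.neighborSet x \ (G.map π.toEmbedding).neighborSet x).ncard

/-- The maximum mismatch count `MMC(π)`: the maximum degree of the mismatch graph `G^π − H`. -/
noncomputable def MMC [Fintype W] (G : SimpleGraph V) (H : SimpleGraph W) (π : V ≃ W) : ℕ :=
  Finset.univ.sup (mismatchDeg G H π)

/-- The edit mismatch norm `μ_edit(G^π, H)`: the number of edges of the mismatch graph. -/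
noncomputable def muEdit (G : SimpleGraph V) (H : SimpleGraph W) (π : V ≃ W) : ℕ :=
  (mismatchGraph G H π).edgeSet.ncard

/-- The edit distance `δ_edit(G, H)`: the minimum of `μ_edit(G^π, H)` over all bijections. -/
noncomputable def deltaEdit (G : SimpleGraph V) (H : SimpleGraph W) : ℕ :=
  ⨅ π : V ≃ W, muEdit G H π

open Classical in
/-- The signed adjacency matrix of the mismatch graph `G^π − H`:
`+1` on positive edges, `−1` on negative edges, `0` otherwise. -/
noncomputable def signedAdj (G : SimpleGraph V) (H : SimpleGraph W) (π : V ≃ W) :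
    Matrix W W ℝ := fun x y =>
  if (G.map π.toEmbedding).Adj x y ∧ ¬ H.Adj x y then 1
  else if H.Adj x y ∧ ¬ (G.map π.toEmbedding).Adj x y then -1 else 0

/-- The `ℓ_p` norm of a vector over a finite index type. -/
noncomputable def lpNorm [Fintype W] (p : ℝ) (x : W → ℝ) : ℝ :=
  (∑ i, |x i| ^ p) ^ p⁻¹

/-- The `ℓ_p`-operator norm of a matrix: `sup_{x ≠ 0} ‖Mx‖_p / ‖x‖_p`. -/
noncomputable def lpOpNorm [Fintype W] (p : ℝ) (M : Matrix W W ℝ) : ℝ :=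
  ⨆ x : {x : W → ℝ // x ≠ 0}, lpNorm p (M.mulVec x.1) / lpNorm p x.1

end MismatchDefs

/-- The graph `H_k` on vertex set `{0, 1, …, 2k−1}`: the Hamiltonian cycle
`0 − 1 − ⋯ − (2k−1) − 0` together with, for even `k`, the chords `{i, i+2}` for
`i ≡ 0, 1 (mod 4)`, and for odd `k`, the chords `{i, i−2}` for `i ≡ 2 (mod 4)`,
`{i, i+2}` for `i ≡ 3 (mod 4)`, and `{2k−2, 1}`. -/
def Hk (k : ℕ) : SimpleGraph (Fin (2 * k)) :=
  SimpleGraph.fromRel (fun a b =>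
    (b.val = a.val + 1) ∨ (a.val = 2 * k - 1 ∧ b.val = 0) ∨
    (if k % 2 = 0 then
      (a.val % 4 = 0 ∨ a.val % 4 = 1) ∧ b.val = a.val + 2
    else
      (a.val % 4 = 2 ∧ b.val = a.val - 2) ∨ (a.val % 4 = 3 ∧ b.val = a.val + 2) ∨
        (a.val = 2 * k - 2 ∧ b.val = 1)))

/-- Attach `5` new pendant leaves to every vertex satisfying `P` and `12` new pendant
leaves to every other vertex. The leaves of `v` are `Sum.inr ⟨v, i⟩`. -/
def hatGraph {V : Type*} (G : SimpleGraph V) (P : V → Prop) [DecidablePred P] :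
    SimpleGraph (V ⊕ Σ v : V, Fin (if P v then 5 else 12)) :=
  SimpleGraph.fromRel (fun a b =>
    match a, b with
    | Sum.inl u, Sum.inl v => G.Adj u v
    | Sum.inl u, Sum.inr x => u = x.1
    | _, _ => False)

/-- `σ ∈ Res(G_k, H_k)`: the bijection `σ` maps the independent set `A` onto the even
vertices `Even(2k)` (and hence its complement `B` onto the odd vertices `Odd(2k)`). -/
def InRes {V : Type*} (k : ℕ) (A : Finset V) (σ : V ≃ Fin (2 * k)) : Prop :=
  ∀ v, v ∈ A ↔ (σ v).val % 2 = 0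

set_option linter.unusedSectionVars false

section SpecNorm

open Finset

variable {n : Type*} [Fintype n] [Nonempty n]

private lemma lpNorm_two_eq_sqrt (x : n → ℝ) :
    lpNorm 2 x = Real.sqrt (∑ i, x i ^ 2) := by
  rw [lpNorm, Real.sqrt_eq_rpow]
  have h1 : ∀ i : n, |x i| ^ (2 : ℝ) = x i ^ 2 := fun i => by
    rw [show (2 : ℝ) = ((2 : ℕ) : ℝ) by norm_num, Real.rpow_natCast, sq_abs]
  rw [Finset.sum_congr rfl fun i _ => h1 i]
  norm_num

private lemma sum_sq_nonneg (x : n → ℝ) : 0 ≤ ∑ i, x i ^ 2 :=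
  Finset.sum_nonneg fun _ _ => sq_nonneg _

private lemma lpNorm_two_nonneg (x : n → ℝ) : 0 ≤ lpNorm 2 x := by
  rw [lpNorm_two_eq_sqrt]; exact Real.sqrt_nonneg _

private lemma lpNorm_two_sq (x : n → ℝ) : lpNorm 2 x ^ 2 = ∑ i, x i ^ 2 := by
  rw [lpNorm_two_eq_sqrt]; exact Real.sq_sqrt (sum_sq_nonneg x)

private lemma sum_sq_pos (x : n → ℝ) (hx : x ≠ 0) : 0 < ∑ i, x i ^ 2 := by
  obtain ⟨i, hi⟩ : ∃ i, x i ≠ 0 := by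
    by_contra h
    push_neg at h
    exact hx (funext fun i => h i)
  have h1 : x i ^ 2 ≤ ∑ j, x j ^ 2 :=
    Finset.single_le_sum (f := fun j => x j ^ 2) (fun _ _ => sq_nonneg _) (Finset.mem_univ i)
  have h2 : 0 < x i ^ 2 := by positivity
  linarith

private lemma lpNorm_two_pos (x : n → ℝ) (hx : x ≠ 0) : 0 < lpNorm 2 x := by
  rw [lpNorm_two_eq_sqrt]; exact Real.sqrt_pos.mpr (sum_sq_pos x hx)

private lemma sum_sq_mulVec_le (M : Matrix n n ℝ) (x : n → ℝ) :
    ∑ i, (M.mulVec x i) ^ 2 ≤ (∑ i, ∑ j, M i j ^ 2) * ∑ j, x j ^ 2 := by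
  rw [Finset.sum_mul]
  apply Finset.sum_le_sum
  intro i _
  exact Finset.sum_mul_sq_le_sq_mul_sq Finset.univ (fun j => M i j) x

private lemma mulVec_lpNorm_le (M : Matrix n n ℝ) (x : n → ℝ) :
    lpNorm 2 (M.mulVec x) ≤ Real.sqrt (∑ i, ∑ j, M i j ^ 2) * lpNorm 2 x := by
  rw [lpNorm_two_eq_sqrt, lpNorm_two_eq_sqrt, ← Real.sqrt_mul (by positivity)]
  exact Real.sqrt_le_sqrt (sum_sq_mulVec_le M x)

private lemma neZeroVec : Nonempty {x : n → ℝ // x ≠ 0} :=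
  ⟨⟨fun _ => 1, fun h => by
    have := congrFun h (Classical.arbitrary n)
    simp at this⟩⟩

private lemma bddAboveQuot (M : Matrix n n ℝ) :
    BddAbove (Set.range fun x : {x : n → ℝ // x ≠ 0} =>
      lpNorm 2 (M.mulVec x.1) / lpNorm 2 x.1) := by
  refine ⟨Real.sqrt (∑ i, ∑ j, M i j ^ 2), ?_⟩
  rintro r ⟨x, rfl⟩
  rw [div_le_iff₀ (lpNorm_two_pos x.1 x.2)]
  exact mulVec_lpNorm_le M x.1

private lemma quot_le_opNorm (M : Matrix n n ℝ) (x : n → ℝ) (hx : x ≠ 0) :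
    lpNorm 2 (M.mulVec x) / lpNorm 2 x ≤ lpOpNorm 2 M := by
  haveI := neZeroVec (n := n)
  exact le_ciSup (bddAboveQuot M) ⟨x, hx⟩

private lemma lpOpNorm_nonneg (M : Matrix n n ℝ) : 0 ≤ lpOpNorm 2 M := by
  obtain ⟨x⟩ := neZeroVec (n := n)
  refine le_trans ?_ (quot_le_opNorm M x.1 x.2)
  exact div_nonneg (lpNorm_two_nonneg _) (lpNorm_two_nonneg _)

private lemma lpNorm_mulVec_le_opNorm (M : Matrix n n ℝ) (x : n → ℝ) :
    lpNorm 2 (M.mulVec x) ≤ lpOpNorm 2 M * lpNorm 2 x := by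
  by_cases hx : x = 0
  · subst hx
    rw [Matrix.mulVec_zero]
    have h0 : lpNorm 2 (0 : n → ℝ) = 0 := by
      rw [lpNorm_two_eq_sqrt]
      simp
    rw [h0, mul_zero]
  · rw [← div_le_iff₀ (lpNorm_two_pos x hx)]
    exact quot_le_opNorm M x hx

private lemma lpOpNorm_le_of (M : Matrix n n ℝ) (c : ℝ)
    (h : ∀ x : n → ℝ, x ≠ 0 → lpNorm 2 (M.mulVec x) ≤ c * lpNorm 2 x) :
    lpOpNorm 2 M ≤ c := by
  haveI := neZeroVec (n := n)
  refine ciSup_le fun x => ?_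
  rw [div_le_iff₀ (lpNorm_two_pos x.1 x.2)]
  exact h x.1 x.2

private lemma dot_mulVec_symm (M : Matrix n n ℝ) (hsym : ∀ i j, M i j = M j i)
    (u v : n → ℝ) : ∑ i, M.mulVec u i * v i = ∑ j, u j * M.mulVec v j := by
  simp only [Matrix.mulVec, dotProduct]
  calc ∑ i, (∑ j, M i j * u j) * v i = ∑ i, ∑ j, M i j * u j * v i := by
        exact Finset.sum_congr rfl fun i _ => Finset.sum_mul _ _ _
    _ = ∑ j, ∑ i, M i j * u j * v i := Finset.sum_comm
    _ = ∑ j, u j * ∑ i, M j i * v i := by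
        refine Finset.sum_congr rfl fun j _ => ?_
        rw [Finset.mul_sum]
        refine Finset.sum_congr rfl fun i _ => ?_
        rw [hsym i j]; ring

private lemma lpOpNorm_mul_self_of_symm (M : Matrix n n ℝ)
    (hsym : ∀ i j, M i j = M j i) :
    lpOpNorm 2 (M * M) = lpOpNorm 2 M ^ 2 := by
  have hβ0 : 0 ≤ lpOpNorm 2 (M * M) := lpOpNorm_nonneg _
  have hl0 : 0 ≤ lpOpNorm 2 M := lpOpNorm_nonneg _
  have hMM : ∀ x : n → ℝ, (M * M).mulVec x = M.mulVec (M.mulVec x) := fun x =>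
    (Matrix.mulVec_mulVec x M M).symm
  apply le_antisymm
  · refine lpOpNorm_le_of _ _ fun x hx => ?_
    rw [hMM]
    calc lpNorm 2 (M.mulVec (M.mulVec x)) ≤ lpOpNorm 2 M * lpNorm 2 (M.mulVec x) :=
          lpNorm_mulVec_le_opNorm M _
      _ ≤ lpOpNorm 2 M * (lpOpNorm 2 M * lpNorm 2 x) := by
          have := lpNorm_mulVec_le_opNorm M x
          nlinarith [lpNorm_two_nonneg (M.mulVec x)]
      _ = lpOpNorm 2 M ^ 2 * lpNorm 2 x := by ring
  · have key : ∀ x : n → ℝ, x ≠ 0 →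
        lpNorm 2 (M.mulVec x) / lpNorm 2 x ≤ Real.sqrt (lpOpNorm 2 (M * M)) := by
      intro x hx
      have hQMx : ∑ i, (M.mulVec x i) ^ 2 ≤ lpOpNorm 2 (M * M) * ∑ i, x i ^ 2 := by
        have h1 : ∑ i, (M.mulVec x i) ^ 2 = ∑ i, M.mulVec (M.mulVec x) i * x i := by
          rw [dot_mulVec_symm M hsym (M.mulVec x) x]
          exact Finset.sum_congr rfl fun i _ => by ring
        have h2 : ∑ i, M.mulVec (M.mulVec x) i * x i ≤
            lpNorm 2 (M.mulVec (M.mulVec x)) * lpNorm 2 x := by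
          have hcs := Finset.sum_mul_sq_le_sq_mul_sq Finset.univ
            (fun i => M.mulVec (M.mulVec x) i) x
          have h3 : ∑ i, M.mulVec (M.mulVec x) i * x i ≤
              Real.sqrt ((∑ i, (M.mulVec (M.mulVec x) i) ^ 2) * ∑ i, x i ^ 2) := by
            refine le_trans (Real.le_sqrt_of_sq_le ?_) (le_refl _)
            exact hcs
          rw [Real.sqrt_mul (sum_sq_nonneg _)] at h3
          rw [lpNorm_two_eq_sqrt, lpNorm_two_eq_sqrt]
          exact h3
        have h4 : lpNorm 2 (M.mulVec (M.mulVec x)) * lpNorm 2 x ≤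
            (lpOpNorm 2 (M * M) * lpNorm 2 x) * lpNorm 2 x := by
          have h5 : lpNorm 2 (M.mulVec (M.mulVec x)) ≤ lpOpNorm 2 (M * M) * lpNorm 2 x := by
            rw [← hMM]
            exact lpNorm_mulVec_le_opNorm (M * M) x
          nlinarith [lpNorm_two_nonneg x]
        have h6 : (lpOpNorm 2 (M * M) * lpNorm 2 x) * lpNorm 2 x =
            lpOpNorm 2 (M * M) * ∑ i, x i ^ 2 := by
          rw [mul_assoc, ← sq, lpNorm_two_sq]
        linarith
      rw [div_le_iff₀ (lpNorm_two_pos x hx), lpNorm_two_eq_sqrt, lpNorm_two_eq_sqrt,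
        ← Real.sqrt_mul hβ0]
      apply Real.sqrt_le_sqrt
      exact hQMx

    have hle : lpOpNorm 2 M ≤ Real.sqrt (lpOpNorm 2 (M * M)) := by
      haveI := neZeroVec (n := n)
      exact ciSup_le fun x => key x.1 x.2
    calc lpOpNorm 2 M ^ 2 ≤ Real.sqrt (lpOpNorm 2 (M * M)) ^ 2 := by
          nlinarith [Real.sqrt_nonneg (lpOpNorm 2 (M * M))]
      _ = lpOpNorm 2 (M * M) := Real.sq_sqrt hβ0

private lemma spectral_contra (M : Matrix n n ℝ) (x0 : n)
    (hsym : ∀ i j, M i j = M j i) (hrow : ∀ i, ∑ j, M i j = 0)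
    (hd4 : (4 : ℝ) ≤ ∑ j, M x0 j ^ 2) (hle : lpOpNorm 2 M ^ 2 ≤ 4) : False := by
  classical
  set c : ℝ := (Fintype.card n : ℝ) with hc
  set t : ℝ := -c with ht
  set u : n → ℝ := fun j => t * (if j = x0 then (1 : ℝ) else 0) + 1 with hu
  have hMu : ∀ i, M.mulVec u i = t * M i x0 := by
    intro i
    show ∑ j, M i j * u j = t * M i x0
    have h1 : ∀ j, M i j * u j = t * (if j = x0 then M i j else 0) + M i j := by
      intro j
      rw [hu]
      by_cases h : j = x0 <;> simp [h] <;> ring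
    rw [Finset.sum_congr rfl fun j _ => h1 j, Finset.sum_add_distrib, hrow i, add_zero,
      ← Finset.mul_sum, Finset.sum_ite_eq' Finset.univ x0 (fun j => M i j)]
    simp
  have hQMu : ∑ i, M.mulVec u i ^ 2 = t ^ 2 * ∑ i, M x0 i ^ 2 := by
    have h1 : ∀ i, M.mulVec u i ^ 2 = t ^ 2 * M x0 i ^ 2 := by
      intro i
      rw [hMu i, hsym i x0]
      ring
    rw [Finset.sum_congr rfl fun i _ => h1 i, ← Finset.mul_sum]
  have hQu : ∑ i, u i ^ 2 = t ^ 2 + 2 * t + c := by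
    have h1 : ∀ i, u i ^ 2
        = (t ^ 2 + 2 * t) * (if i = x0 then (1 : ℝ) else 0) + 1 := by
      intro i
      rw [hu]
      by_cases h : i = x0 <;> simp [h] <;> ring
    rw [Finset.sum_congr rfl fun i _ => h1 i, Finset.sum_add_distrib, ← Finset.mul_sum,
      Finset.sum_ite_eq' Finset.univ x0 (fun _ => (1 : ℝ))]
    simp only [Finset.mem_univ, if_true, Finset.sum_const, Finset.card_univ, nsmul_eq_mul,
      mul_one]
    rfl
  have hb2 : ∑ i, M.mulVec u i ^ 2 ≤ 4 * ∑ i, u i ^ 2 := by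
    have h0 : 0 ≤ lpOpNorm 2 M := lpOpNorm_nonneg M
    have hb := lpNorm_mulVec_le_opNorm M u
    have h1 : lpNorm 2 (M.mulVec u) ^ 2 ≤ (lpOpNorm 2 M * lpNorm 2 u) ^ 2 := by
      nlinarith [lpNorm_two_nonneg (M.mulVec u), lpNorm_two_nonneg u]
    rw [mul_pow, lpNorm_two_sq, lpNorm_two_sq] at h1
    nlinarith [sum_sq_nonneg u]
  have hc1 : (1 : ℝ) ≤ c := by
    rw [hc]
    exact_mod_cast Fintype.card_pos
  have hd4' : (4 : ℝ) ≤ ∑ i, M x0 i ^ 2 := hd4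
  have hkey : 0 ≤ t ^ 2 * (∑ i, M x0 i ^ 2) - 4 * t ^ 2 := by
    have := mul_nonneg (by linarith : (0:ℝ) ≤ ∑ i, M x0 i ^ 2 - 4) (sq_nonneg t)
    nlinarith [this]
  rw [hQMu, hQu] at hb2
  have hfin : (0 : ℝ) ≤ 8 * t + 4 * c := by linarith
  rw [ht] at hfin
  linarith

end SpecNorm


open Classical in
private lemma signedAdj_apply {V W : Type*} (G : SimpleGraph V) (H : SimpleGraph W)
    (π : V ≃ W) (x y : W) :
    signedAdj G H π x y = (if (G.map π.toEmbedding).Adj x y ∧ ¬ H.Adj x y then (1 : ℝ)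
      else if H.Adj x y ∧ ¬ (G.map π.toEmbedding).Adj x y then -1 else 0) := rfl

section HkDegree

set_option maxHeartbeats 1000000

private lemma Hk_adj_even (k : ℕ) (hk : 2 ≤ k) (hk2 : k % 2 = 0) (x y : Fin (2 * k)) :
    (Hk k).Adj x y ↔ (y.val = (if x.val = 2 * k - 1 then 0 else x.val + 1) ∨
      y.val = (if x.val = 0 then 2 * k - 1 else x.val - 1) ∨
      y.val = (if x.val % 4 ≤ 1 then x.val + 2 else x.val - 2)) := by
  have hx : x.val < 2 * k := x.isLt
  have hy : y.val < 2 * k := y.isLt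
  simp only [Hk, SimpleGraph.fromRel_adj, ne_eq, Fin.ext_iff, hk2, if_true]
  rcases (by omega : x.val % 4 = 0 ∨ x.val % 4 = 1 ∨ x.val % 4 = 2 ∨ x.val % 4 = 3) with
    h4|h4|h4|h4 <;>
  split_ifs <;>
  (constructor
   · rintro ⟨hne, (h|h|h)|(h|h|h)⟩ <;> omega
   · rintro (h|h|h) <;> refine ⟨by omega, ?_⟩ <;>
      first
      | exact Or.inl (Or.inl (by omega))
      | exact Or.inr (Or.inl (by omega))
      | exact Or.inl (Or.inr (Or.inl (by omega)))
      | exact Or.inr (Or.inr (Or.inl (by omega)))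
      | exact Or.inl (Or.inr (Or.inr (by omega)))
      | exact Or.inr (Or.inr (Or.inr (by omega))))

private lemma Hk_adj_odd (k : ℕ) (hk : 2 ≤ k) (hk2 : ¬ k % 2 = 0) (x y : Fin (2 * k)) :
    (Hk k).Adj x y ↔ (y.val = (if x.val = 2 * k - 1 then 0 else x.val + 1) ∨
      y.val = (if x.val = 0 then 2 * k - 1 else x.val - 1) ∨
      y.val = (if x.val = 1 then 2 * k - 2 else if x.val = 2 * k - 2 then 1
        else if x.val % 4 = 0 ∨ x.val % 4 = 3 then x.val + 2 else x.val - 2)) := by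
  have hx : x.val < 2 * k := x.isLt
  have hy : y.val < 2 * k := y.isLt
  simp only [Hk, SimpleGraph.fromRel_adj, ne_eq, Fin.ext_iff, hk2, if_false]
  rcases (by omega : x.val % 4 = 0 ∨ x.val % 4 = 1 ∨ x.val % 4 = 2 ∨ x.val % 4 = 3) with
    h4|h4|h4|h4 <;>
  split_ifs <;>
  (constructor
   · rintro ⟨hne, (h|h|(h|h|h))|(h|h|(h|h|h))⟩ <;> omega
   · rintro (h|h|h) <;> refine ⟨by omega, ?_⟩ <;>
      first
      | exact Or.inl (Or.inl (by omega))
      | exact Or.inr (Or.inl (by omega))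
      | exact Or.inl (Or.inr (Or.inl (by omega)))
      | exact Or.inr (Or.inr (Or.inl (by omega)))
      | exact Or.inl (Or.inr (Or.inr (Or.inl (by omega))))
      | exact Or.inl (Or.inr (Or.inr (Or.inr (Or.inl (by omega)))))
      | exact Or.inl (Or.inr (Or.inr (Or.inr (Or.inr (by omega)))))
      | exact Or.inr (Or.inr (Or.inr (Or.inl (by omega))))
      | exact Or.inr (Or.inr (Or.inr (Or.inr (Or.inl (by omega)))))
      | exact Or.inr (Or.inr (Or.inr (Or.inr (Or.inr (by omega))))))

private lemma Hk_three_neighbors (k : ℕ) (hk : 2 ≤ k) (x : Fin (2 * k)) :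
    ∃ a b c : Fin (2 * k), a ≠ b ∧ a ≠ c ∧ b ≠ c ∧
      ∀ y : Fin (2 * k), (Hk k).Adj x y ↔ (y = a ∨ y = b ∨ y = c) := by
  have hx : x.val < 2 * k := x.isLt
  by_cases hk2 : k % 2 = 0
  · refine ⟨⟨if x.val = 2 * k - 1 then 0 else x.val + 1, by split <;> omega⟩,
      ⟨if x.val = 0 then 2 * k - 1 else x.val - 1, by split <;> omega⟩,
      ⟨if x.val % 4 ≤ 1 then x.val + 2 else x.val - 2, by split <;> omega⟩, ?_, ?_, ?_, ?_⟩
    · simp only [ne_eq, Fin.mk.injEq]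
      split_ifs <;> omega
    · simp only [ne_eq, Fin.mk.injEq]
      split_ifs <;> omega
    · simp only [ne_eq, Fin.mk.injEq]
      split_ifs <;> omega
    · intro y
      rw [Hk_adj_even k hk hk2 x y]
      simp only [Fin.ext_iff]
  · refine ⟨⟨if x.val = 2 * k - 1 then 0 else x.val + 1, by split <;> omega⟩,
      ⟨if x.val = 0 then 2 * k - 1 else x.val - 1, by split <;> omega⟩,
      ⟨if x.val = 1 then 2 * k - 2 else if x.val = 2 * k - 2 then 1
        else if x.val % 4 = 0 ∨ x.val % 4 = 3 then x.val + 2 else x.val - 2,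
        by split_ifs <;> omega⟩, ?_, ?_, ?_, ?_⟩
    · simp only [ne_eq, Fin.mk.injEq]
      split_ifs <;> omega
    · simp only [ne_eq, Fin.mk.injEq]
      split_ifs <;> omega
    · simp only [ne_eq, Fin.mk.injEq]
      split_ifs <;> omega
    · intro y
      rw [Hk_adj_odd k hk hk2 x y]
      simp only [Fin.ext_iff]

open Classical in
private lemma Hk_degree_sum (k : ℕ) (hk : 2 ≤ k) (x : Fin (2 * k)) :
    ∑ y : Fin (2 * k), (if (Hk k).Adj x y then (1 : ℝ) else 0) = 3 := by
  classical
  obtain ⟨a, b, c, hab, hac, hbc, hadj⟩ := Hk_three_neighbors k hk x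
  have h1 : ∀ y, (if (Hk k).Adj x y then (1 : ℝ) else 0)
      = (if y = a ∨ y = b ∨ y = c then (1 : ℝ) else 0) := fun y =>
    if_congr (hadj y) rfl rfl
  rw [Finset.sum_congr rfl fun y _ => h1 y, ← Finset.sum_filter]
  have h2 : Finset.univ.filter (fun y => y = a ∨ y = b ∨ y = c) = {a, b, c} := by
    ext y
    simp
  rw [h2, Finset.sum_insert (by simp [hab, hac]), Finset.sum_insert (by simp [hbc]),
    Finset.sum_singleton]
  norm_num

end HkDegree


/-- Let `k ≥ 2`, `G` a 3-regular bipartite graph on `2k` vertices with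
bipartition into independent sets `A, B` of size `k`, and `σ ∈ Res(G, H_k)`. If the
mismatch graph `G^σ − H_k` has a vertex of degree at least `4`, then the spectral norms of
its signed adjacency matrix `A(σ)` satisfy `‖A(σ)²‖₂ = ‖A(σ)‖₂² > 4`. -/
theorem statement_14 {V : Type*} [Fintype V] [DecidableEq V] (k : ℕ) (hk : 2 ≤ k)
    (G : SimpleGraph V) [DecidableRel G.Adj] (A B : Finset V)
    (hcard : Fintype.card V = 2 * k) (hA : A.card = k) (hB : B.card = k)
    (hUnion : ∀ v, v ∈ A ∨ v ∈ B) (hDisj : Disjoint A B)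
    (hreg : G.IsRegularOfDegree 3)
    (hAind : ∀ u ∈ A, ∀ v ∈ A, ¬ G.Adj u v) (hBind : ∀ u ∈ B, ∀ v ∈ B, ¬ G.Adj u v)
    (σ : V ≃ Fin (2 * k)) (hσ : InRes k A σ)
    (hdeg : ∃ x : Fin (2 * k), 4 ≤ mismatchDeg G (Hk k) σ x) :
    lpOpNorm 2 (signedAdj G (Hk k) σ * signedAdj G (Hk k) σ)
        = (lpOpNorm 2 (signedAdj G (Hk k) σ)) ^ 2 ∧
      4 < (lpOpNorm 2 (signedAdj G (Hk k) σ)) ^ 2 := by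
  classical
  obtain ⟨x0, hx0⟩ := hdeg
  haveI : Nonempty (Fin (2 * k)) := ⟨⟨0, by omega⟩⟩
  set M := signedAdj G (Hk k) σ with hM
  have hmap : ∀ a b, (G.map σ.toEmbedding).Adj a b ↔ G.Adj (σ.symm a) (σ.symm b) := by
    intro a b
    constructor
    · rintro ⟨-, u, v, h, rfl, rfl⟩
      simpa using h
    · intro h
      exact ⟨fun hab => h.ne (congrArg σ.symm hab), σ.symm a, σ.symm b, h, σ.apply_symm_apply a, σ.apply_symm_apply b⟩
  have hGdeg : ∀ i, ∑ j, (if (G.map σ.toEmbedding).Adj i j then (1 : ℝ) else 0) = 3 := by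
    intro i
    have h1 : ∀ j, (if (G.map σ.toEmbedding).Adj i j then (1 : ℝ) else 0)
        = (if G.Adj (σ.symm i) (σ.symm j) then (1 : ℝ) else 0) := fun j =>
      if_congr (hmap i j) rfl rfl
    rw [Finset.sum_congr rfl fun j _ => h1 j]
    have h2 : ∑ j : Fin (2 * k), (if G.Adj (σ.symm i) (σ.symm j) then (1 : ℝ) else 0)
        = ∑ v, (if G.Adj (σ.symm i) v then (1 : ℝ) else 0) :=
      Equiv.sum_comp σ.symm (fun v => if G.Adj (σ.symm i) v then (1 : ℝ) else 0)
    rw [h2]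
    have h3 : (G.neighborFinset (σ.symm i)).card = 3 := hreg (σ.symm i)
    calc ∑ v, (if G.Adj (σ.symm i) v then (1 : ℝ) else 0)
        = ∑ _v ∈ G.neighborFinset (σ.symm i), (1 : ℝ) := by
          rw [← Finset.sum_filter]
          refine Finset.sum_congr ?_ fun _ _ => rfl
          ext v
          simp [SimpleGraph.mem_neighborFinset]
      _ = 3 := by rw [Finset.sum_const, h3]; norm_num
  have hHdeg : ∀ i : Fin (2 * k), ∑ j, (if (Hk k).Adj i j then (1 : ℝ) else 0) = 3 :=
    fun i => Hk_degree_sum k hk i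
  have hentry : ∀ i j, M i j = (if (G.map σ.toEmbedding).Adj i j then (1 : ℝ) else 0)
      - (if (Hk k).Adj i j then (1 : ℝ) else 0) := by
    intro i j
    rw [hM, signedAdj_apply]
    by_cases h1 : (G.map σ.toEmbedding).Adj i j <;> by_cases h2 : (Hk k).Adj i j
    · rw [if_neg (by tauto), if_neg (by tauto), if_pos h1, if_pos h2]; norm_num
    · rw [if_pos ⟨h1, h2⟩, if_pos h1, if_neg h2]; norm_num
    · rw [if_neg (by tauto), if_pos ⟨h2, h1⟩, if_neg h1, if_pos h2]; norm_num
    · rw [if_neg (by tauto), if_neg (by tauto), if_neg h1, if_neg h2]; norm_num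
  have hsym : ∀ i j, M i j = M j i := by
    intro i j
    rw [hentry i j, hentry j i,
      if_congr (Iff.intro (fun h => h.symm) (fun h => h.symm) :
        (G.map σ.toEmbedding).Adj i j ↔ (G.map σ.toEmbedding).Adj j i) rfl rfl,
      if_congr (Iff.intro (fun h => h.symm) (fun h => h.symm) :
        (Hk k).Adj i j ↔ (Hk k).Adj j i) rfl rfl]
  have hrow : ∀ i, ∑ j, M i j = 0 := by
    intro i
    rw [Finset.sum_congr rfl fun j _ => hentry i j, Finset.sum_sub_distrib, hGdeg i, hHdeg i]
    ring
  have hDentry : ∀ j, M x0 j ^ 2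
      = (if (mismatchGraph G (Hk k) σ).Adj x0 j then (1 : ℝ) else 0) := by
    intro j
    have hD : (mismatchGraph G (Hk k) σ).Adj x0 j ↔
        (((G.map σ.toEmbedding).Adj x0 j ∧ ¬ (Hk k).Adj x0 j) ∨
          ((Hk k).Adj x0 j ∧ ¬ (G.map σ.toEmbedding).Adj x0 j)) := by
      rw [mismatchGraph, symmDiff_def]
      simp [SimpleGraph.sup_adj, SimpleGraph.sdiff_adj]
    rw [hM, signedAdj_apply]
    by_cases h1 : (G.map σ.toEmbedding).Adj x0 j <;> by_cases h2 : (Hk k).Adj x0 j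
    · rw [if_neg (by tauto), if_neg (by tauto), if_neg (by rw [hD]; tauto)]; norm_num
    · rw [if_pos ⟨h1, h2⟩, if_pos (hD.mpr (Or.inl ⟨h1, h2⟩))]; norm_num
    · rw [if_neg (by tauto), if_pos ⟨h2, h1⟩, if_pos (hD.mpr (Or.inr ⟨h2, h1⟩))]; norm_num
    · rw [if_neg (by tauto), if_neg (by tauto), if_neg (by rw [hD]; tauto)]; norm_num
  have hd4 : (4 : ℝ) ≤ ∑ j, M x0 j ^ 2 := by
    have hset : (mismatchGraph G (Hk k) σ).neighborSet x0 =
        ↑(Finset.univ.filter fun y => (mismatchGraph G (Hk k) σ).Adj x0 y) := by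
      ext y
      simp
    have hcount : (mismatchDeg G (Hk k) σ x0 : ℝ) = ∑ j, M x0 j ^ 2 := by
      rw [Finset.sum_congr rfl fun j _ => hDentry j, ← Finset.sum_filter,
        Finset.sum_const, mismatchDeg, hset, Set.ncard_coe_finset]
      simp
    have h4 : (4 : ℝ) ≤ (mismatchDeg G (Hk k) σ x0 : ℝ) := by exact_mod_cast hx0
    rw [hcount] at h4
    exact h4
  refine ⟨lpOpNorm_mul_self_of_symm M hsym, ?_⟩
  by_contra hle
  push_neg at hle
  exact spectral_contra M x0 hsym hrow hd4 hle
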